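/- arXiv:1202.4512 — 4 statements merged into one kernel-verified Lean document; each statement's English description precedes it below -/
import Mathlib

section
/- Let ζ ∈ (0, 1/2) and let Z : (0,∞) → [0,∞) be a measurable function with ∫₀^∞ Z(τ)² dτ < ∞. Assume that there exist constants C > 0 and t₀ ≥ 0 such that ∫_t^∞ Z(τ)² dτ ≤ C · Z(t)^{1/(1−ζ)} for almost every t ≥ t₀. Then Z is integrable on (t₀, ∞), i.e., ∫_{t₀}^∞ Z(τ) dτ < ∞. -/
open MeasureTheory Set Filter Topology ENNReal

private lemma ray_bound (f : ℝ → ℝ≥0∞) (a : ℝ) (c : ℝ≥0∞)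
    (h : ∀ v, a < v → ∫⁻ t in Set.Ioi v, f t ≤ c) :
    ∫⁻ t in Set.Ioi a, f t ≤ c := by
  have hU : Set.Ioi a = ⋃ k : ℕ, Set.Ioi (a + 1 / (k + 1)) := by
    ext t
    simp only [Set.mem_Ioi, Set.mem_iUnion]
    constructor
    · intro ht
      obtain ⟨k, hk⟩ := exists_nat_one_div_lt (sub_pos.mpr ht)
      exact ⟨k, by push_cast at hk ⊢; linarith⟩
    · rintro ⟨k, hk⟩
      have h1 : (0:ℝ) < 1 / ((k:ℝ) + 1) := by positivity
      linarith
  have hmono : Monotone fun k : ℕ => Set.Ioi (a + 1 / ((k:ℝ) + 1)) := by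
    intro k l hkl
    apply Set.Ioi_subset_Ioi
    have h2 : (1:ℝ)/((l:ℝ)+1) ≤ 1/((k:ℝ)+1) := by
      apply one_div_le_one_div_of_le (by positivity)
      have : (k:ℝ) ≤ (l:ℝ) := Nat.cast_le.mpr hkl
      linarith
    linarith
  calc ∫⁻ t in Set.Ioi a, f t
      = (volume.withDensity f) (Set.Ioi a) := (withDensity_apply _ measurableSet_Ioi).symm
    _ = ⨆ k : ℕ, (volume.withDensity f) (Set.Ioi (a + 1/((k:ℝ)+1))) := by
        rw [hU, Directed.measure_iUnion hmono.directed_le]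
    _ ≤ c := by
        apply iSup_le
        intro k
        rw [withDensity_apply _ measurableSet_Ioi]
        refine h _ ?_
        have h1 : (0:ℝ) < 1 / ((k:ℝ) + 1) := by positivity
        linarith

/-- Integrability lemma (Huang–Takáč / Feireisl–Simondon): if `Z ≥ 0` is measurable with
`Z² ∈ L¹(0,∞)` and `∫_t^∞ Z(τ)² dτ ≤ C Z(t)^{1/(1−ζ)}` for a.e. `t ≥ t₀`, where
`ζ ∈ (0,1/2)`, then `Z ∈ L¹(t₀,∞)`. -/
theorem integrability_lemma (ζ : ℝ) (hζ : ζ ∈ Set.Ioo (0 : ℝ) (1 / 2))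
    (Z : ℝ → ℝ) (hZmeas : Measurable Z) (hZnonneg : ∀ t ∈ Set.Ioi (0 : ℝ), 0 ≤ Z t)
    (hZsq : IntegrableOn (fun τ => Z τ ^ 2) (Set.Ioi 0))
    (C t₀ : ℝ) (hC : 0 < C) (ht₀ : 0 ≤ t₀)
    (hineq : ∀ᵐ t ∂(volume : Measure ℝ), t₀ ≤ t →
      ∫ τ in Set.Ioi t, Z τ ^ 2 ≤ C * Z t ^ ((1 : ℝ) / (1 - ζ))) :
    IntegrableOn Z (Set.Ioi t₀) := by
  obtain ⟨hζ0, hζ2⟩ := hζ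
  have hζ1 : (0:ℝ) < 1 - ζ := by linarith
  set φ : ℝ → ℝ := fun t => ∫ τ in Set.Ioi t, Z τ ^ 2 with hφdef
  have hsqnn : ∀ τ : ℝ, (0:ℝ) ≤ Z τ ^ 2 := fun τ => sq_nonneg _
  have hint : ∀ v : ℝ, 0 ≤ v → IntegrableOn (fun τ => Z τ ^ 2) (Set.Ioi v) :=
    fun v hv => hZsq.mono_set (Set.Ioi_subset_Ioi hv)
  have hφnn : ∀ v : ℝ, 0 ≤ φ v :=
    fun v => setIntegral_nonneg measurableSet_Ioi fun x _ => hsqnn x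
  have hφanti : ∀ u v : ℝ, 0 ≤ u → u ≤ v → φ v ≤ φ u := by
    intro u v hu huv
    refine setIntegral_mono_set (hint u hu) (Eventually.of_forall fun x => hsqnn x) ?_
    exact HasSubset.Subset.eventuallyLE (Set.Ioi_subset_Ioi huv)
  have hφν : ∀ v : ℝ, 0 ≤ v →
      ENNReal.ofReal (φ v) = ∫⁻ t in Set.Ioi v, ENNReal.ofReal (Z t ^ 2) := by
    intro v hv
    exact ofReal_integral_eq_lintegral_ofReal (hint v hv)
      (Eventually.of_forall fun x => hsqnn x)
  rcases (hφnn t₀).eq_or_lt with hφ0 | hφ0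
  · -- degenerate case: φ t₀ = 0, so Z = 0 a.e. on (t₀, ∞)
    have hz2 : (fun τ => Z τ ^ 2) =ᵐ[volume.restrict (Set.Ioi t₀)] 0 := by
      refine (integral_eq_zero_iff_of_nonneg_ae (Eventually.of_forall fun x => hsqnn x)
        (hint t₀ ht₀)).mp hφ0.symm
    have hz : (0 : ℝ → ℝ) =ᵐ[volume.restrict (Set.Ioi t₀)] Z := by
      filter_upwards [hz2] with t ht
      have : Z t ^ 2 = 0 := ht
      exact (pow_eq_zero_iff two_ne_zero).mp this |>.symm
    exact (integrable_zero _ _ _).congr hz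
  -- main case: φ t₀ > 0
  set θ : ℝ := 1/2 with hθdef
  have hθpos : (0:ℝ) < θ := by norm_num
  set S : ℕ → Set ℝ := fun n => {t | t₀ ≤ t ∧ φ t ≤ φ t₀ * θ ^ n} with hSdef
  have hex : ∀ δ : ℝ, 0 < δ → ∃ t, t₀ ≤ t ∧ φ t ≤ δ := by
    intro δ hδ
    set ν : Measure ℝ := volume.withDensity (fun t => ENNReal.ofReal (Z t ^ 2)) with hνdef
    have hνIoi : ∀ v : ℝ, 0 ≤ v → ν (Set.Ioi v) = ENNReal.ofReal (φ v) := by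
      intro v hv
      rw [hνdef, withDensity_apply _ measurableSet_Ioi, hφν v hv]
    have h0 : ν (Set.Ioi (0:ℝ)) ≠ ⊤ := by
      rw [hνIoi 0 le_rfl]; exact ENNReal.ofReal_ne_top
    have hanti : Antitone fun n : ℕ => Set.Ioi ((n:ℝ)) := by
      intro k l hkl
      exact Set.Ioi_subset_Ioi (Nat.cast_le.mpr hkl)
    have hempty : (⋂ n : ℕ, Set.Ioi ((n:ℝ))) = ∅ := by
      ext t
      simp only [Set.mem_iInter, Set.mem_Ioi, Set.mem_empty_iff_false, iff_false, not_forall,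
        not_lt]
      obtain ⟨n, hn⟩ := exists_nat_gt t
      exact ⟨n, hn.le⟩
    have htend : Tendsto (fun n : ℕ => ν (Set.Ioi ((n:ℝ)))) atTop (𝓝 0) := by
      have := tendsto_measure_iInter_atTop (μ := ν)
        (fun n => (measurableSet_Ioi).nullMeasurableSet) hanti ⟨0, by simpa using h0⟩
      rw [hempty] at this
      simpa [Function.comp_def] using this
    have hev : ∀ᶠ n : ℕ in atTop, ν (Set.Ioi ((n:ℝ))) < ENNReal.ofReal δ :=
      htend.eventually_lt_const (ENNReal.ofReal_pos.mpr hδ)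
    obtain ⟨n, hn⟩ := hev.exists
    refine ⟨max t₀ n, le_max_left _ _, ?_⟩
    have h1 : ν (Set.Ioi (max t₀ n)) ≤ ν (Set.Ioi ((n:ℝ))) :=
      measure_mono (Set.Ioi_subset_Ioi (le_max_right _ _))
    have h2 : ENNReal.ofReal (φ (max t₀ n)) < ENNReal.ofReal δ := by
      rw [← hνIoi _ (le_trans ht₀ (le_max_left _ _))]
      exact lt_of_le_of_lt h1 hn
    exact le_of_lt ((ENNReal.ofReal_lt_ofReal_iff hδ).mp h2)
  have hSne : ∀ n, (S n).Nonempty := by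
    intro n
    obtain ⟨t, ht1, ht2⟩ := hex (φ t₀ * θ ^ n) (by positivity)
    exact ⟨t, ht1, ht2⟩
  have hSbdd : ∀ n, BddBelow (S n) := fun n => ⟨t₀, fun x hx => hx.1⟩
  set s : ℕ → ℝ := fun n => sInf (S n) with hsdef
  have hst₀ : ∀ n, t₀ ≤ s n := fun n => le_csInf (hSne n) fun x hx => hx.1
  have hsmono : Monotone s := by
    apply monotone_nat_of_le_succ
    intro n
    apply csInf_le_csInf (hSbdd n) (hSne (n+1))
    intro x hx
    refine ⟨hx.1, le_trans hx.2 ?_⟩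
    have h7 : θ ^ (n+1) ≤ θ ^ n :=
      pow_le_pow_of_le_one hθpos.le (by rw [hθdef]; norm_num) (Nat.le_succ n)
    exact mul_le_mul_of_nonneg_left h7 hφ0.le
  have hφle : ∀ n, ∀ v, s n < v → φ v ≤ φ t₀ * θ ^ n := by
    intro n v hv
    obtain ⟨u, huS, huv⟩ := exists_lt_of_csInf_lt (hSne n) hv
    exact le_trans (hφanti u v (le_trans ht₀ huS.1) huv.le) huS.2
  have hlt : ∀ n, ∀ t, t₀ ≤ t → t < s n → φ t₀ * θ ^ n < φ t := by
    intro n t ht hts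
    by_contra hcon
    push_neg at hcon
    exact absurd (csInf_le (hSbdd n) ⟨ht, hcon⟩) (not_le.mpr hts)
  have hνn : ∀ n, ∫⁻ t in Set.Ioi (s n), ENNReal.ofReal (Z t ^ 2)
      ≤ ENNReal.ofReal (φ t₀ * θ ^ n) := by
    intro n
    apply ray_bound
    intro v hv
    rw [← hφν v (le_trans (le_trans ht₀ (hst₀ n)) hv.le)]
    exact ENNReal.ofReal_le_ofReal (hφle n v hv)
  set c : ℕ → ℝ := fun n => (φ t₀ * θ ^ (n+1) / C) ^ (1 - ζ) with hcdef
  have hc : ∀ n, 0 < c n := fun n => Real.rpow_pos_of_pos (by positivity) _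
  -- per-band estimate
  have key : ∀ n, ∫⁻ t in Set.Icc (s n) (s (n+1)), ENNReal.ofReal (Z t)
      ≤ ENNReal.ofReal (φ t₀ * θ ^ n) * ENNReal.ofReal (c n)⁻¹ := by
    intro n
    have hres : volume.restrict (Set.Icc (s n) (s (n+1)))
        = volume.restrict (Set.Ico (s n) (s (n+1))) :=
      (Measure.restrict_congr_set Ico_ae_eq_Icc).symm
    have hne : ∀ᵐ t : ℝ ∂volume, t ≠ t₀ := by
      have : volume ({t₀} : Set ℝ) = 0 := measure_singleton t₀
      rw [ae_iff]
      simpa using this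
    have hae : ∀ᵐ t ∂(volume.restrict (Set.Ico (s n) (s (n+1)))),
        ENNReal.ofReal (Z t) ≤ ENNReal.ofReal (Z t ^ 2) * ENNReal.ofReal (c n)⁻¹ := by
      filter_upwards [ae_restrict_of_ae hineq, ae_restrict_of_ae hne,
        ae_restrict_mem measurableSet_Ico] with t hQ hnet ht
      obtain ⟨ht1, ht2⟩ := ht
      have htt₀ : t₀ < t := lt_of_le_of_ne (le_trans (hst₀ n) ht1) (Ne.symm hnet)
      have hφt : φ t₀ * θ ^ (n+1) < φ t := hlt (n+1) t htt₀.le ht2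
      have hQ' : φ t ≤ C * Z t ^ ((1:ℝ)/(1-ζ)) := hQ htt₀.le
      have hb : (0:ℝ) < φ t₀ * θ ^ (n+1) / C := by positivity
      have h2 : φ t₀ * θ ^ (n+1) / C < Z t ^ ((1:ℝ)/(1-ζ)) := by
        rw [div_lt_iff₀ hC]
        calc φ t₀ * θ ^ (n+1) < φ t := hφt
          _ ≤ C * Z t ^ ((1:ℝ)/(1-ζ)) := hQ'
          _ = Z t ^ ((1:ℝ)/(1-ζ)) * C := mul_comm _ _
      have hZnn' : 0 ≤ Z t := hZnonneg t (lt_of_le_of_lt ht₀ htt₀)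
      have hZt : c n ≤ Z t := by
        have h3 := Real.rpow_lt_rpow hb.le h2 hζ1
        rw [← Real.rpow_mul hZnn'] at h3
        have h4 : (1:ℝ)/(1-ζ) * (1-ζ) = 1 := by field_simp
        rw [h4, Real.rpow_one] at h3
        have hcrfl : c n = (φ t₀ * θ ^ (n+1) / C) ^ (1 - ζ) := rfl
        rw [hcrfl]
        exact le_of_lt h3
      have hZpos : 0 < Z t := lt_of_lt_of_le (hc n) hZt
      have h5 : Z t ≤ Z t ^ 2 * (c n)⁻¹ := by
        rw [← div_eq_mul_inv, le_div_iff₀ (hc n)]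
        nlinarith
      calc ENNReal.ofReal (Z t) ≤ ENNReal.ofReal (Z t ^ 2 * (c n)⁻¹) :=
            ENNReal.ofReal_le_ofReal h5
        _ = ENNReal.ofReal (Z t ^ 2) * ENNReal.ofReal (c n)⁻¹ :=
            ENNReal.ofReal_mul (hsqnn t)
    have hmeas2 : Measurable fun t => ENNReal.ofReal (Z t ^ 2) :=
      ENNReal.measurable_ofReal.comp (hZmeas.pow_const 2)
    calc ∫⁻ t in Set.Icc (s n) (s (n+1)), ENNReal.ofReal (Z t)
        = ∫⁻ t in Set.Ico (s n) (s (n+1)), ENNReal.ofReal (Z t) := by rw [hres]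
      _ ≤ ∫⁻ t in Set.Ico (s n) (s (n+1)),
            ENNReal.ofReal (Z t ^ 2) * ENNReal.ofReal (c n)⁻¹ := lintegral_mono_ae hae
      _ = (∫⁻ t in Set.Ico (s n) (s (n+1)), ENNReal.ofReal (Z t ^ 2))
            * ENNReal.ofReal (c n)⁻¹ := lintegral_mul_const _ hmeas2
      _ ≤ ENNReal.ofReal (φ t₀ * θ ^ n) * ENNReal.ofReal (c n)⁻¹ := by
          refine mul_le_mul_left ?_ _
          calc ∫⁻ t in Set.Ico (s n) (s (n+1)), ENNReal.ofReal (Z t ^ 2)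
              ≤ ∫⁻ t in Set.Ici (s n), ENNReal.ofReal (Z t ^ 2) :=
                lintegral_mono_set Set.Ico_subset_Ici_self
            _ = ∫⁻ t in Set.Ioi (s n), ENNReal.ofReal (Z t ^ 2) := by
                rw [Measure.restrict_congr_set Ioi_ae_eq_Ici]
            _ ≤ ENNReal.ofReal (φ t₀ * θ ^ n) := hνn n
  -- the tail where φ vanishes
  set T : Set ℝ := {t | ∀ n, s n ≤ t} with hTdef
  have hTzero : ∫⁻ t in T, ENNReal.ofReal (Z t) = 0 := by
    by_cases hbdd : BddAbove (Set.range s)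
    · set Ssup : ℝ := sSup (Set.range s) with hSsupdef
      have hSsup0 : (0:ℝ) ≤ Ssup :=
        le_trans (le_trans ht₀ (hst₀ 0)) (le_csSup hbdd ⟨0, rfl⟩)
      have hTsub : T ⊆ Set.Ici Ssup := by
        intro t ht
        exact csSup_le (Set.range_nonempty s) (by rintro x ⟨n, rfl⟩; exact ht n)
      have hφS : ∀ v, Ssup < v → φ v = 0 := by
        intro v hv
        refine le_antisymm ?_ (hφnn v)
        have hlim : Tendsto (fun n : ℕ => φ t₀ * θ ^ n) atTop (𝓝 0) := by
          have := (tendsto_pow_atTop_nhds_zero_of_lt_one (by norm_num : (0:ℝ) ≤ θ)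
            (by norm_num : θ < 1)).const_mul (φ t₀)
          simpa using this
        refine ge_of_tendsto hlim (Eventually.of_forall fun n => ?_)
        exact hφle n v (lt_of_le_of_lt (le_csSup hbdd ⟨n, rfl⟩) hv)
      have hIoi0 : ∀ v, Ssup < v → ∫⁻ t in Set.Ioi v, ENNReal.ofReal (Z t) = 0 := by
        intro v hv
        have hv0 : (0:ℝ) ≤ v := le_trans hSsup0 hv.le
        have h2 : ∫⁻ t in Set.Ioi v, ENNReal.ofReal (Z t ^ 2) = 0 := by
          rw [← hφν v hv0, hφS v hv]
          simp
        have hmeas2 : Measurable fun t => ENNReal.ofReal (Z t ^ 2) :=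
          ENNReal.measurable_ofReal.comp (hZmeas.pow_const 2)
        have h3 := (lintegral_eq_zero_iff hmeas2).mp h2
        have h4 : (fun t => ENNReal.ofReal (Z t)) =ᵐ[volume.restrict (Set.Ioi v)] 0 := by
          filter_upwards [h3] with t ht
          have ht' : ENNReal.ofReal (Z t ^ 2) = 0 := ht
          have : Z t ^ 2 ≤ 0 := ENNReal.ofReal_eq_zero.mp ht'
          have hz : Z t = 0 := by
            have := (hsqnn t).antisymm this
            exact (pow_eq_zero_iff two_ne_zero).mp this.symm
          simp [hz]
        rw [lintegral_congr_ae h4]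
        simp
      have hIci : ∫⁻ t in Set.Ici Ssup, ENNReal.ofReal (Z t) = 0 := by
        rw [← Measure.restrict_congr_set Ioi_ae_eq_Ici]
        exact le_antisymm (ray_bound _ _ _ fun v hv => (hIoi0 v hv).le) (zero_le)
      exact le_antisymm (le_trans (lintegral_mono_set hTsub) hIci.le) (zero_le)
    · have hTempty : T = ∅ := by
        ext t
        simp only [Set.mem_empty_iff_false, iff_false, hTdef, Set.mem_setOf_eq]
        intro ht
        exact hbdd ⟨t, by rintro x ⟨n, rfl⟩; exact ht n⟩
      rw [hTempty]
      simp
  -- covering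
  have hcover : Set.Ioi t₀ ⊆ T ∪ ⋃ n, Set.Icc (s n) (s (n+1)) := by
    intro t ht
    by_cases hall : ∀ n, s n ≤ t
    · exact Or.inl hall
    push_neg at hall
    have hs0 : s 0 ≤ t := by
      apply csInf_le (hSbdd 0)
      refine ⟨le_of_lt ht, ?_⟩
      simpa using hφanti t₀ t ht₀ (le_of_lt ht)
    right
    have hexn : ∃ n, t < s n := hall
    classical
    set m := Nat.find hexn with hmdef
    have hm : t < s m := Nat.find_spec hexn
    have hm0 : m ≠ 0 := by
      intro h0
      rw [h0] at hm
      exact absurd hs0 (not_le.mpr hm)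
    obtain ⟨k, hk⟩ := Nat.exists_eq_succ_of_ne_zero hm0
    refine Set.mem_iUnion.mpr ⟨k, ?_⟩
    constructor
    · by_contra hcon
      push_neg at hcon
      have h8 : m ≤ k := Nat.find_le hcon
      omega
    · rw [hk] at hm; exact hm.le
  -- arithmetic: the geometric bound
  set q : ℝ := φ t₀ / C with hqdef
  have hq : 0 < q := div_pos hφ0 hC
  set r : ℝ := θ ^ (ζ:ℝ) with hrdef
  have hr0 : 0 < r := Real.rpow_pos_of_pos hθpos _
  have hr1 : r < 1 := Real.rpow_lt_one (by norm_num) (by norm_num) hζ0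
  set K : ℝ := 2 * C * q ^ (ζ:ℝ) * r with hKdef
  have hK : 0 < K := by positivity
  have han : ∀ n, φ t₀ * θ ^ n / c n = K * r ^ n := by
    intro n
    have hx : (0:ℝ) < q * θ ^ (n+1) := by positivity
    have hcn : c n = (q * θ ^ (n+1)) ^ (1 - ζ) := by
      rw [hcdef]
      congr 1
      rw [hqdef]
      ring
    have hkey : φ t₀ * θ ^ n = 2 * C * (q * θ ^ (n+1)) := by
      rw [hqdef, hθdef]
      field_simp
      ring
    have hpowζ : ((θ:ℝ) ^ (n+1)) ^ (ζ:ℝ) = r ^ (n+1) := by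
      rw [hrdef, ← Real.rpow_natCast (θ ^ (ζ:ℝ)) (n+1), ← Real.rpow_mul hθpos.le,
        ← Real.rpow_natCast θ (n+1), ← Real.rpow_mul hθpos.le, mul_comm]
    have hdiv : (q * θ ^ (n+1)) / (q * θ ^ (n+1)) ^ ((1:ℝ) - ζ) = (q * θ ^ (n+1)) ^ (ζ:ℝ) := by
      have hxp : 0 < (q * θ ^ (n+1)) ^ ((1:ℝ) - ζ) := Real.rpow_pos_of_pos hx _
      rw [div_eq_iff hxp.ne', ← Real.rpow_add hx, show ζ + (1 - ζ) = 1 by ring, Real.rpow_one]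
    calc φ t₀ * θ ^ n / c n
        = 2 * C * ((q * θ ^ (n+1)) / (q * θ ^ (n+1)) ^ ((1:ℝ) - ζ)) := by
          rw [hkey, hcn]; ring
      _ = 2 * C * (q * θ ^ (n+1)) ^ (ζ:ℝ) := by rw [hdiv]
      _ = 2 * C * (q ^ (ζ:ℝ) * ((θ ^ (n+1)) ^ (ζ:ℝ))) := by
          rw [Real.mul_rpow hq.le (by positivity)]
      _ = 2 * C * (q ^ (ζ:ℝ) * r ^ (n+1)) := by rw [hpowζ]
      _ = K * r ^ n := by rw [hKdef, pow_succ]; ring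
  -- put everything together
  have main : ∫⁻ t in Set.Ioi t₀, ENNReal.ofReal (Z t) < ⊤ := by
    have h1 : ∫⁻ t in Set.Ioi t₀, ENNReal.ofReal (Z t)
        ≤ ∑' n : ℕ, ENNReal.ofReal (K * r ^ n) := by
      calc ∫⁻ t in Set.Ioi t₀, ENNReal.ofReal (Z t)
          ≤ ∫⁻ t in T ∪ ⋃ n, Set.Icc (s n) (s (n+1)), ENNReal.ofReal (Z t) :=
            lintegral_mono_set hcover
        _ ≤ (∫⁻ t in T, ENNReal.ofReal (Z t))
              + ∫⁻ t in ⋃ n, Set.Icc (s n) (s (n+1)), ENNReal.ofReal (Z t) :=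
            lintegral_union_le _ _ _
        _ ≤ 0 + ∑' n : ℕ, ∫⁻ t in Set.Icc (s n) (s (n+1)), ENNReal.ofReal (Z t) := by
            rw [hTzero]
            exact add_le_add le_rfl (lintegral_iUnion_le _ _)
        _ ≤ ∑' n : ℕ, ENNReal.ofReal (K * r ^ n) := by
            rw [zero_add]
            refine ENNReal.tsum_le_tsum fun n => ?_
            refine le_trans (key n) ?_
            rw [← ENNReal.ofReal_mul (by positivity), ← div_eq_mul_inv, han n]
    have h2 : ∑' n : ℕ, ENNReal.ofReal (K * r ^ n) < ⊤ := by
      have h3 : ∀ n : ℕ, ENNReal.ofReal (K * r ^ n)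
          = ENNReal.ofReal K * (ENNReal.ofReal r) ^ n := by
        intro n
        rw [ENNReal.ofReal_mul hK.le, ENNReal.ofReal_pow hr0.le]
      rw [tsum_congr h3, ENNReal.tsum_mul_left, ENNReal.tsum_geometric]
      refine ENNReal.mul_lt_top ENNReal.ofReal_lt_top ?_
      rw [lt_top_iff_ne_top]
      refine ENNReal.inv_ne_top.mpr ?_
      rw [ne_eq, tsub_eq_zero_iff_le, not_le]
      exact ENNReal.ofReal_lt_one.mpr hr1
    exact lt_of_le_of_lt h1 h2
  refine ⟨hZmeas.aestronglyMeasurable.restrict, ?_⟩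
  rw [hasFiniteIntegral_iff_norm]
  have hcong : ∫⁻ t in Set.Ioi t₀, ENNReal.ofReal ‖Z t‖
      = ∫⁻ t in Set.Ioi t₀, ENNReal.ofReal (Z t) := by
    refine lintegral_congr_ae ?_
    filter_upwards [ae_restrict_mem measurableSet_Ioi] with t ht
    rw [Real.norm_of_nonneg (hZnonneg t (lt_of_le_of_lt ht₀ ht))]
  rw [hcong]
  exact main
end

section
/- Let ζ ∈ (0, 1/2), ξ > 0, C > 0, t₀ ≥ 0, and let K : [t₀,∞) → [0,∞) be differentiable and nonincreasing, satisfying K(t)^{2(1−ζ)} ≤ −C K′(t) + C (1+t)^{−2(1−ζ)(1+ξ)} for all t ≥ t₀. Then there exists a constant C′ > 0 such that K(t) ≤ C′ (1+t)^{−ι} for all t ≥ t₀, where ι = min{ 1/(1−2ζ), 1+ξ }. -/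
open MeasureTheory

/-- Łojasiewicz-type differential inequality with polynomially decaying forcing
(Ben Hassen's Lemma 2.6): if the nonnegative, differentiable, nonincreasing function `K`
satisfies `K(t)^{2(1−ζ)} ≤ −C K′(t) + C (1+t)^{−2(1−ζ)(1+ξ)}` for all `t ≥ t₀`, then
`K(t) ≤ C′ (1+t)^{−ι}` with `ι = min{1/(1−2ζ), 1+ξ}`. -/
theorem lojasiewicz_ode_decay (ζ ξ C t₀ : ℝ) (hζ : ζ ∈ Set.Ioo (0 : ℝ) (1 / 2))
    (hξ : 0 < ξ) (hC : 0 < C) (ht₀ : 0 ≤ t₀)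
    (K : ℝ → ℝ) (hKnonneg : ∀ t ≥ t₀, 0 ≤ K t)
    (hKdiff : ∀ t ≥ t₀, DifferentiableAt ℝ K t)
    (hKmono : AntitoneOn K (Set.Ici t₀))
    (hineq : ∀ t ≥ t₀,
      K t ^ (2 * (1 - ζ)) ≤ -C * deriv K t + C * (1 + t) ^ (-(2 * (1 - ζ) * (1 + ξ)))) :
    ∃ C' : ℝ, 0 < C' ∧ ∀ t ≥ t₀,
      K t ≤ C' * (1 + t) ^ (-min (1 / (1 - 2 * ζ)) (1 + ξ)) := by
  obtain ⟨hζ0, hζh⟩ := hζ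
  have h2ζ : 0 < 1 - 2 * ζ := by linarith
  set ι := min (1 / (1 - 2 * ζ)) (1 + ξ) with hιdef
  have hι0 : 0 < ι := lt_min (by positivity) (by linarith)
  have hιξ : ι ≤ 1 + ξ := min_le_right _ _
  have ha1 : (1 : ℝ) < 2 * (1 - ζ) := by linarith
  have haι : 2 * (1 - ζ) * ι ≤ ι + 1 := by
    have h1 : ι ≤ 1 / (1 - 2 * ζ) := min_le_left _ _
    have h2 : ι * (1 - 2 * ζ) ≤ 1 := (le_div_iff₀ h2ζ).mp h1
    nlinarith
  have haξ : ι * (2 * (1 - ζ)) ≤ 2 * (1 - ζ) * (1 + ξ) := by nlinarith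
  -- choose the constant M
  set A := C * ι + C with hAdef
  have hA0 : 0 < A := by positivity
  set M := max 1 (max (A ^ (2 * (1 - ζ) - 1)⁻¹) (K t₀ * (1 + t₀) ^ ι)) with hMdef
  have hM1 : (1 : ℝ) ≤ M := le_max_left _ _
  have hM0 : (0 : ℝ) < M := by linarith
  have hMA : A ≤ M ^ (2 * (1 - ζ) - 1) := by
    have h1 : A ^ (2 * (1 - ζ) - 1)⁻¹ ≤ M :=
      le_trans (le_max_left _ _) (le_max_right _ _)
    calc A = (A ^ (2 * (1 - ζ) - 1)⁻¹) ^ (2 * (1 - ζ) - 1) :=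
          (Real.rpow_inv_rpow hA0.le (by linarith)).symm
      _ ≤ M ^ (2 * (1 - ζ) - 1) :=
          Real.rpow_le_rpow (by positivity) h1 (by linarith)
  have hMsuper : C * M * ι + C ≤ M ^ (2 * (1 - ζ)) := by
    have hsplit : M ^ (2 * (1 - ζ)) = M * M ^ (2 * (1 - ζ) - 1) := by
      conv_lhs => rw [show (2 * (1 - ζ)) = 1 + (2 * (1 - ζ) - 1) by ring]
      rw [Real.rpow_add hM0, Real.rpow_one]
    rw [hsplit]
    have : M * A ≤ M * M ^ (2 * (1 - ζ) - 1) :=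
      mul_le_mul_of_nonneg_left hMA hM0.le
    nlinarith
  -- the barrier function
  set ψ : ℝ → ℝ := fun t => M * (1 + t) ^ (-ι) with hψdef
  have hψderiv : ∀ t : ℝ, 0 < 1 + t →
      HasDerivAt ψ (M * (1 * -ι * (1 + t) ^ (-ι - 1))) t := by
    intro t ht
    have h1 : HasDerivAt (fun u : ℝ => 1 + u) 1 t := (hasDerivAt_id t).const_add 1
    exact (h1.rpow_const (Or.inl ht.ne')).const_mul M
  have hψpos : ∀ t : ℝ, 0 < 1 + t → 0 < ψ t := by
    intro t ht
    exact mul_pos hM0 (Real.rpow_pos_of_pos ht _)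
  -- supersolution property
  have hsuper : ∀ t : ℝ, 0 ≤ t →
      -C * (M * (1 * -ι * (1 + t) ^ (-ι - 1)))
        + C * (1 + t) ^ (-(2 * (1 - ζ) * (1 + ξ))) ≤ ψ t ^ (2 * (1 - ζ)) := by
    intro t ht
    have h1t : (1 : ℝ) ≤ 1 + t := by linarith
    have h0t : (0 : ℝ) < 1 + t := by linarith
    have hLHS : ψ t ^ (2 * (1 - ζ))
        = M ^ (2 * (1 - ζ)) * (1 + t) ^ (-(ι * (2 * (1 - ζ)))) := by
      show (M * (1 + t) ^ (-ι)) ^ (2 * (1 - ζ)) = _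
      rw [Real.mul_rpow hM0.le (Real.rpow_nonneg h0t.le _),
        ← Real.rpow_mul h0t.le]
      try rw [neg_mul]
    have e1 : (1 + t) ^ (-ι - 1) ≤ (1 + t) ^ (-(ι * (2 * (1 - ζ)))) :=
      Real.rpow_le_rpow_of_exponent_le h1t (by nlinarith)
    have e2 : (1 + t) ^ (-(2 * (1 - ζ) * (1 + ξ))) ≤ (1 + t) ^ (-(ι * (2 * (1 - ζ)))) :=
      Real.rpow_le_rpow_of_exponent_le h1t (by linarith)
    have hterm : -C * (M * (1 * -ι * (1 + t) ^ (-ι - 1)))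
        = C * M * ι * (1 + t) ^ (-ι - 1) := by ring
    rw [hLHS, hterm]
    have hCMι : (0:ℝ) ≤ C * M * ι := by positivity
    calc C * M * ι * (1 + t) ^ (-ι - 1) + C * (1 + t) ^ (-(2 * (1 - ζ) * (1 + ξ)))
        ≤ C * M * ι * (1 + t) ^ (-(ι * (2 * (1 - ζ))))
          + C * (1 + t) ^ (-(ι * (2 * (1 - ζ)))) := by
          gcongr
      _ = (C * M * ι + C) * (1 + t) ^ (-(ι * (2 * (1 - ζ)))) := by ring
      _ ≤ M ^ (2 * (1 - ζ)) * (1 + t) ^ (-(ι * (2 * (1 - ζ)))) := by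
          gcongr
  refine ⟨M, hM0, ?_⟩
  -- initial condition
  have hinit : K t₀ ≤ ψ t₀ := by
    have h1 : K t₀ * (1 + t₀) ^ ι ≤ M :=
      le_trans (le_max_right _ _) (le_max_right _ _)
    have h0t : (0 : ℝ) < 1 + t₀ := by linarith
    have h2 : (0:ℝ) < (1 + t₀) ^ ι := Real.rpow_pos_of_pos h0t _
    show K t₀ ≤ M * (1 + t₀) ^ (-ι)
    rw [Real.rpow_neg h0t.le, ← div_eq_mul_inv, le_div_iff₀ h2]
    exact h1
  -- main comparison argument
  intro t₁ ht₁
  by_contra hcon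
  push_neg at hcon
  have ht₁0 : (0:ℝ) < 1 + t₁ := by linarith
  set S := {t : ℝ | t ∈ Set.Icc t₀ t₁ ∧ K t ≤ ψ t} with hSdef
  have ht₀S : t₀ ∈ S := ⟨⟨le_refl _, ht₁⟩, hinit⟩
  have hSne : S.Nonempty := ⟨t₀, ht₀S⟩
  have hSbdd : BddAbove S := ⟨t₁, fun x hx => hx.1.2⟩
  set s := sSup S with hsdef
  have hst₀ : t₀ ≤ s := le_csSup hSbdd ht₀S
  have hst₁ : s ≤ t₁ := csSup_le hSne fun x hx => hx.1.2
  -- K s ≤ ψ s via closure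
  have hKψs : K s ≤ ψ s := by
    have hscl : s ∈ closure S := csSup_mem_closure hSne hSbdd
    have hcont : ContinuousAt (fun t => ψ t - K t) s := by
      have h0 : (0:ℝ) < 1 + s := by linarith
      exact ((hψderiv s h0).differentiableAt.continuousAt.sub
        (hKdiff s hst₀).continuousAt)
    obtain ⟨x, hxS, hxlim⟩ := mem_closure_iff_seq_limit.mp hscl
    have htend : Filter.Tendsto (fun n => ψ (x n) - K (x n)) Filter.atTop
        (nhds (ψ s - K s)) := (hcont.tendsto).comp hxlim
    have hnn : ∀ n, (0:ℝ) ≤ ψ (x n) - K (x n) := fun n => sub_nonneg.mpr (hxS n).2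
    have := ge_of_tendsto htend (Filter.Eventually.of_forall hnn)
    linarith
  have hψt₁ : ψ t₁ < K t₁ := hcon
  have hst₁' : s < t₁ := by
    rcases lt_or_eq_of_le hst₁ with h | h
    · exact h
    · exfalso; rw [h] at hKψs; linarith
  -- on (s, t₁], K > ψ
  have hKgt : ∀ t, s < t → t ≤ t₁ → ψ t < K t := by
    intro t hst htt₁
    by_contra h
    push_neg at h
    have : t ∈ S := ⟨⟨le_trans hst₀ hst.le, htt₁⟩, h⟩
    exact absurd (le_csSup hSbdd this) (not_le.mpr hst)
  -- g := ψ - K is monotone on [s, t₁]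
  have hmono : MonotoneOn (fun t => ψ t - K t) (Set.Icc s t₁) := by
    apply monotoneOn_of_deriv_nonneg (convex_Icc s t₁)
    · intro t ht
      have ht0 : t₀ ≤ t := le_trans hst₀ ht.1
      have h0t : (0:ℝ) < 1 + t := by linarith
      exact ((hψderiv t h0t).differentiableAt.continuousAt.sub
        (hKdiff t ht0).continuousAt).continuousWithinAt
    · intro t ht
      rw [interior_Icc] at ht
      have ht0 : t₀ ≤ t := le_trans hst₀ ht.1.le
      have h0t : (0:ℝ) < 1 + t := by linarith
      exact ((hψderiv t h0t).differentiableAt.sub (hKdiff t ht0)).differentiableWithinAt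
    · intro t ht
      rw [interior_Icc] at ht
      have ht0 : t₀ ≤ t := le_trans hst₀ ht.1.le
      have h0t : (0:ℝ) < 1 + t := by linarith
      have hψd := hψderiv t h0t
      have hKψ : ψ t < K t := hKgt t ht.1 ht.2.le
      have hψpos' : 0 < ψ t := hψpos t h0t
      have hpow : ψ t ^ (2 * (1 - ζ)) ≤ K t ^ (2 * (1 - ζ)) :=
        Real.rpow_le_rpow hψpos'.le hKψ.le (by linarith)
      have h1 := hineq t ht0
      have h2 := hsuper t (by linarith)
      have h3 : C * deriv K t ≤ C * (M * (1 * -ι * (1 + t) ^ (-ι - 1))) := by linarith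
      have h4 : deriv K t ≤ M * (1 * -ι * (1 + t) ^ (-ι - 1)) :=
        (mul_le_mul_iff_right₀ hC).mp h3
      rw [deriv_fun_sub hψd.differentiableAt (hKdiff t ht0), hψd.deriv]
      linarith
  have hfin := hmono (Set.left_mem_Icc.mpr hst₁) (Set.right_mem_Icc.mpr hst₁) hst₁
  simp only [] at hfin
  linarith
end

section
/- Let c > 0, κ > 0, ξ > 0 with 2κ ≤ 1+ξ, and M > 0. Let Q : [0,∞) → ℝ be differentiable and let h₁, h₂ : [0,∞) → [0,∞) be measurable functions such that Q′(t) + c Q(t) ≤ h₁(t) + h₂(t) for all t ≥ 0, h₁(t) ≤ M (1+t)^{−2κ} for all t ≥ 0, and ∫_t^∞ h₂(τ) dτ ≤ M (1+t)^{−(1+ξ)} for all t ≥ 0. Then there exists a constant C > 0 (depending on c, κ, ξ, M and Q(0)) such that Q(t) ≤ C (1+t)^{−2κ} for all t ≥ 0. -/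
open MeasureTheory
open scoped ENNReal NNReal

/-- Exponential decay beats polynomial growth: `exp (-(b*t)) ≤ A * (1+t)^(-e)`. -/
lemma exp_poly_aux (b e : ℝ) (hb : 0 < b) (he : 0 ≤ e) :
    ∃ A : ℝ, 0 < A ∧ ∀ t ≥ (0 : ℝ), Real.exp (-(b * t)) ≤ A * (1 + t) ^ (-e) := by
  set n := ⌈e⌉₊ with hn
  refine ⟨n.factorial * (1 / b) ^ n * Real.exp b, by positivity, fun t ht => ?_⟩
  have hx1 : (1 : ℝ) ≤ 1 + t := by linarith
  have hx0 : (0 : ℝ) ≤ 1 + t := by linarith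
  set A : ℝ := n.factorial * (1 / b) ^ n * Real.exp b with hA
  have hApos : 0 < A := by positivity
  -- key : (1+t)^e ≤ A * exp (b*t)
  have key : (1 + t) ^ e ≤ A * Real.exp (b * t) := by
    have h1 : (1 + t) ^ e ≤ (1 + t) ^ (n : ℝ) :=
      Real.rpow_le_rpow_of_exponent_le hx1 (Nat.le_ceil e)
    rw [Real.rpow_natCast] at h1
    have h2 : (b * (1 + t)) ^ n / n.factorial ≤ Real.exp (b * (1 + t)) := by
      have hbx : (0 : ℝ) ≤ b * (1 + t) := by positivity
      calc (b * (1 + t)) ^ n / n.factorial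
          ≤ ∑ i ∈ Finset.range (n + 1), (b * (1 + t)) ^ i / i.factorial := by
            refine Finset.single_le_sum (f := fun i => (b * (1 + t)) ^ i / i.factorial)
              (fun i _ => by positivity) (Finset.self_mem_range_succ n)
        _ ≤ Real.exp (b * (1 + t)) := Real.sum_le_exp_of_nonneg hbx _
    have h3 : (1 + t) ^ n ≤ n.factorial * (1 / b) ^ n * Real.exp (b * (1 + t)) := by
      have hbn : (0 : ℝ) < b ^ n := by positivity
      have := (div_le_iff₀ (by positivity : (0:ℝ) < (n.factorial : ℝ))).1 h2
      have hexp : (b * (1 + t)) ^ n = b ^ n * (1 + t) ^ n := mul_pow b (1 + t) n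
      rw [hexp] at this
      have : (1 + t) ^ n ≤ Real.exp (b * (1 + t)) * n.factorial / b ^ n := by
        rw [le_div_iff₀ hbn]; linarith
      calc (1 + t) ^ n ≤ Real.exp (b * (1 + t)) * n.factorial / b ^ n := this
        _ = n.factorial * (1 / b) ^ n * Real.exp (b * (1 + t)) := by
            rw [div_eq_mul_inv, one_div, inv_pow]; ring
    have h4 : Real.exp (b * (1 + t)) = Real.exp b * Real.exp (b * t) := by
      rw [← Real.exp_add]; ring_nf
    calc (1 + t) ^ e ≤ (1 + t) ^ n := h1
      _ ≤ n.factorial * (1 / b) ^ n * Real.exp (b * (1 + t)) := h3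
      _ = A * Real.exp (b * t) := by rw [h4, hA]; ring
  have hEpos : 0 < Real.exp (b * t) := Real.exp_pos _
  have hrp : 0 < (1 + t) ^ e := Real.rpow_pos_of_pos (by linarith) e
  rw [Real.exp_neg, Real.rpow_neg hx0, ← div_eq_mul_inv, le_div_iff₀ hrp]
  rw [inv_mul_eq_div, div_le_iff₀ hEpos] at *
  nlinarith [key]

set_option maxHeartbeats 1000000 in
/-- Linear Gronwall-type decay estimate with mixed polynomial and tail-integrable forcing:
if `Q′ + cQ ≤ h₁ + h₂` with `h₁(t) ≤ M(1+t)^{−2κ}` and `∫_t^∞ h₂ ≤ M(1+t)^{−(1+ξ)}`,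
`2κ ≤ 1+ξ`, then `Q(t) ≤ C (1+t)^{−2κ}`. -/
theorem gronwall_mixed_forcing_decay (c κ ξ M : ℝ) (hc : 0 < c) (hκ : 0 < κ) (hξ : 0 < ξ)
    (hκξ : 2 * κ ≤ 1 + ξ) (hM : 0 < M)
    (Q h₁ h₂ : ℝ → ℝ)
    (hQdiff : ∀ t ≥ (0 : ℝ), DifferentiableAt ℝ Q t)
    (h₁meas : Measurable h₁) (h₂meas : Measurable h₂)
    (h₁nonneg : ∀ t ≥ (0 : ℝ), 0 ≤ h₁ t) (h₂nonneg : ∀ t ≥ (0 : ℝ), 0 ≤ h₂ t)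
    (hineq : ∀ t ≥ (0 : ℝ), deriv Q t + c * Q t ≤ h₁ t + h₂ t)
    (hh₁ : ∀ t ≥ (0 : ℝ), h₁ t ≤ M * (1 + t) ^ (-(2 * κ)))
    (hh₂ : ∀ t ≥ (0 : ℝ),
      ∫⁻ τ in Set.Ioi t, ENNReal.ofReal (h₂ τ) ≤ ENNReal.ofReal (M * (1 + t) ^ (-(1 + ξ)))) :
    ∃ C : ℝ, 0 < C ∧ ∀ t ≥ (0 : ℝ), Q t ≤ C * (1 + t) ^ (-(2 * κ)) := by
  obtain ⟨A, hApos, hA⟩ := exp_poly_aux (c / 2) (2 * κ) (by positivity) (by positivity)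
  -- integrability of h₂ on (0,∞)
  have h2int : IntegrableOn h₂ (Set.Ioi (0 : ℝ)) volume := by
    refine ⟨h₂meas.aestronglyMeasurable.restrict, ?_⟩
    have hae : ∀ᵐ τ ∂(volume.restrict (Set.Ioi (0:ℝ))),
        ‖h₂ τ‖ₑ = ENNReal.ofReal (h₂ τ) := by
      refine (ae_restrict_iff' measurableSet_Ioi).2 (Filter.Eventually.of_forall fun τ hτ => ?_)
      exact Real.enorm_eq_ofReal (h₂nonneg τ (le_of_lt hτ))
    rw [HasFiniteIntegral, lintegral_congr_ae hae]
    exact lt_of_le_of_lt (hh₂ 0 le_rfl) ENNReal.ofReal_lt_top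
  -- tail bound for real integrals of h₂
  have tail : ∀ s b : ℝ, 0 ≤ s → s ≤ b →
      ∫ τ in Set.Ioc s b, h₂ τ ≤ M * (1 + s) ^ (-(1 + ξ)) := by
    intro s b hs hsb
    have hsub : IntegrableOn h₂ (Set.Ioi s) volume :=
      h2int.mono_set (Set.Ioi_subset_Ioi hs)
    have hnn : 0 ≤ᵐ[volume.restrict (Set.Ioi s)] h₂ := by
      refine (ae_restrict_iff' measurableSet_Ioi).2 (Filter.Eventually.of_forall fun τ hτ => ?_)
      exact h₂nonneg τ (le_of_lt (lt_of_le_of_lt hs hτ))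
    have hmono : ∫ τ in Set.Ioc s b, h₂ τ ≤ ∫ τ in Set.Ioi s, h₂ τ :=
      setIntegral_mono_set hsub hnn (HasSubset.Subset.eventuallyLE Set.Ioc_subset_Ioi_self)
    have heq : ∫ τ in Set.Ioi s, h₂ τ = (∫⁻ τ in Set.Ioi s, ENNReal.ofReal (h₂ τ)).toReal :=
      integral_eq_lintegral_of_nonneg_ae hnn h₂meas.aestronglyMeasurable.restrict
    have hle : (∫⁻ τ in Set.Ioi s, ENNReal.ofReal (h₂ τ)).toReal
        ≤ M * (1 + s) ^ (-(1 + ξ)) := by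
      have h1 := ENNReal.toReal_mono ENNReal.ofReal_ne_top (hh₂ s hs)
      rwa [ENNReal.toReal_ofReal (by positivity)] at h1
    rw [heq] at hmono
    linarith [hmono, hle]
  -- integrability of h₂, h₁ on compacts
  have h2icc : ∀ t : ℝ, IntegrableOn h₂ (Set.Icc 0 t) volume := by
    intro t
    rw [integrableOn_Icc_iff_integrableOn_Ioc]
    exact h2int.mono_set Set.Ioc_subset_Ioi_self
  have h1bound : ∀ x ≥ (0 : ℝ), h₁ x ≤ M := by
    intro x hx
    have h1 : (1 + x) ^ (-(2 * κ)) ≤ 1 :=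
      Real.rpow_le_one_of_one_le_of_nonpos (by linarith) (by linarith)
    nlinarith [hh₁ x hx]
  have h1icc : ∀ t : ℝ, IntegrableOn h₁ (Set.Icc 0 t) volume := by
    intro t
    refine Measure.integrableOn_of_bounded (M := M) measure_Icc_lt_top.ne
      h₁meas.aestronglyMeasurable ?_
    refine (ae_restrict_iff' measurableSet_Icc).2 (Filter.Eventually.of_forall fun x hx => ?_)
    rw [Real.norm_eq_abs, abs_of_nonneg (h₁nonneg x hx.1)]
    exact h1bound x hx.1
  -- exponential integral
  have hexpint : ∀ a b : ℝ, ∫ y in a..b, Real.exp (c * y)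
      = (Real.exp (c * b) - Real.exp (c * a)) / c := by
    intro a b
    have hD : ∀ x : ℝ, HasDerivAt (fun y => Real.exp (c * y) / c) (Real.exp (c * x)) x := by
      intro x
      have h := (((hasDerivAt_id x).const_mul c).exp).div_const c
      simpa [mul_div_assoc, mul_comm, mul_div_cancel_left₀, hc.ne'] using h
    rw [intervalIntegral.integral_eq_sub_of_hasDerivAt (fun x _ => hD x)
      ((Real.continuous_exp.comp (continuous_const.mul continuous_id)).intervalIntegrable a b)]
    ring
  set C : ℝ := (|Q 0| + M / c + M) * A + (M / c + M) * (2 : ℝ) ^ (2 * κ) with hC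
  have hCpos : 0 < C := by positivity
  refine ⟨C, hCpos, fun t ht => ?_⟩
  have ht2 : (0 : ℝ) ≤ t / 2 := by linarith
  have ht2' : t / 2 ≤ t := by linarith
  set φ : ℝ → ℝ := fun y => Real.exp (c * y) * (h₁ y + h₂ y) with hφ
  -- integrability of φ on [0, t]
  have φint : IntegrableOn φ (Set.Icc 0 t) volume := by
    have hint : IntegrableOn (fun y => h₁ y + h₂ y) (Set.Icc 0 t) volume :=
      (h1icc t).add (h2icc t)
    have hb : Integrable (fun y => Real.exp (c * min y t) * (h₁ y + h₂ y))
        (volume.restrict (Set.Icc 0 t)) := by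
      refine hint.bdd_mul (c := Real.exp (c * t)) ?_ (Filter.Eventually.of_forall fun x => ?_)
      · exact (Real.continuous_exp.comp
          (continuous_const.mul (continuous_id.min continuous_const))).aestronglyMeasurable
      · rw [Real.norm_eq_abs, abs_of_pos (Real.exp_pos _)]
        exact Real.exp_le_exp.2 (mul_le_mul_of_nonneg_left (min_le_right x t) hc.le)
    refine (IntegrableOn.congr_fun hb (fun y hy => ?_) measurableSet_Icc : IntegrableOn φ _ _)
    simp [hφ, min_eq_left hy.2]
  -- the fundamental inequality
  have hkey : Real.exp (c * t) * Q t - Real.exp (c * 0) * Q 0 ≤ ∫ y in (0:ℝ)..t, φ y := by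
    refine intervalIntegral.sub_le_integral_of_hasDeriv_right_of_le ht ?_ ?_ φint ?_
      (g := fun τ => Real.exp (c * τ) * Q τ)
      (g' := fun x => Real.exp (c * x) * c * Q x + Real.exp (c * x) * deriv Q x)
    · refine ContinuousOn.mul ?_ ?_
      · exact (Real.continuous_exp.comp (continuous_const.mul continuous_id)).continuousOn
      · exact fun x hx => ((hQdiff x hx.1).continuousAt).continuousWithinAt
    · intro x hx
      have h1 : HasDerivAt (fun τ => Real.exp (c * τ)) (Real.exp (c * x) * c) x := by
        simpa using ((hasDerivAt_id x).const_mul c).exp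
      exact ((h1.mul (hQdiff x hx.1.le).hasDerivAt).hasDerivWithinAt)
    · intro x hx
      have h := hineq x hx.1.le
      have he := (Real.exp_pos (c * x)).le
      have hm := mul_le_mul_of_nonneg_left h he
      show Real.exp (c * x) * c * Q x + Real.exp (c * x) * deriv Q x ≤ φ x
      simp only [hφ]
      nlinarith [hm]
  have φii1 : IntervalIntegrable φ volume 0 (t / 2) := by
    refine IntegrableOn.intervalIntegrable ?_
    rw [Set.uIcc_of_le ht2]
    exact φint.mono_set (Set.Icc_subset_Icc le_rfl ht2')
  have φii2 : IntervalIntegrable φ volume (t / 2) t := by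
    refine IntegrableOn.intervalIntegrable ?_
    rw [Set.uIcc_of_le ht2']
    exact φint.mono_set (Set.Icc_subset_Icc ht2 le_rfl)
  have hsplit : ∫ y in (0:ℝ)..t, φ y
      = (∫ y in (0:ℝ)..(t/2), φ y) + ∫ y in (t/2)..t, φ y :=
    (intervalIntegral.integral_add_adjacent_intervals φii1 φii2).symm
  -- interval integrability of h₂
  have h2ii : ∀ a b : ℝ, 0 ≤ a → a ≤ b → IntervalIntegrable h₂ volume a b := by
    intro a b ha hab
    refine IntegrableOn.intervalIntegrable ?_
    rw [Set.uIcc_of_le hab, integrableOn_Icc_iff_integrableOn_Ioc]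
    exact h2int.mono_set (fun x hx => lt_of_le_of_lt ha hx.1)
  -- piece 1
  have hp1 : ∫ y in (0:ℝ)..(t/2), φ y ≤ (M / c + M) * Real.exp (c * (t / 2)) := by
    have hmono : ∫ y in (0:ℝ)..(t/2), φ y
        ≤ ∫ y in (0:ℝ)..(t/2), (M * Real.exp (c * y) + Real.exp (c * (t/2)) * h₂ y) := by
      refine intervalIntegral.integral_mono_on ht2 φii1 ?_ fun x hx => ?_
      · refine IntervalIntegrable.add ?_ ?_
        · exact (continuous_const.mul (Real.continuous_exp.comp
            (continuous_const.mul continuous_id))).intervalIntegrable _ _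
        · exact (h2ii 0 (t/2) le_rfl ht2).const_mul _
      · have hb1 := h1bound x hx.1
        have hb2 : Real.exp (c * x) ≤ Real.exp (c * (t/2)) :=
          Real.exp_le_exp.2 (mul_le_mul_of_nonneg_left hx.2 hc.le)
        have hb3 := h₂nonneg x hx.1
        have he := (Real.exp_pos (c * x)).le
        simp only [hφ]
        nlinarith
    have heq : ∫ y in (0:ℝ)..(t/2), (M * Real.exp (c * y) + Real.exp (c * (t/2)) * h₂ y)
        = M * ((Real.exp (c * (t/2)) - Real.exp (c * 0)) / c)
          + Real.exp (c * (t/2)) * ∫ y in (0:ℝ)..(t/2), h₂ y := by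
      rw [intervalIntegral.integral_add
        (((by continuity : Continuous fun y : ℝ => M * Real.exp (c * y))).intervalIntegrable _ _)
        ((h2ii 0 (t/2) le_rfl ht2).const_mul _),
        intervalIntegral.integral_const_mul, intervalIntegral.integral_const_mul, hexpint]
    have hi2 : ∫ y in (0:ℝ)..(t/2), h₂ y ≤ M := by
      rw [intervalIntegral.integral_of_le ht2]
      have := tail 0 (t/2) le_rfl ht2
      simpa [Real.one_rpow] using this
    have hE : (0:ℝ) < Real.exp (c * (t/2)) := Real.exp_pos _
    have hE1 : (1:ℝ) ≤ Real.exp (c * (t/2)) :=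
      Real.one_le_exp (by positivity)
    have h1 : M * ((Real.exp (c * (t/2)) - Real.exp (c * 0)) / c)
        ≤ (M / c) * Real.exp (c * (t/2)) := by
      rw [mul_zero, Real.exp_zero]
      have key : M * (Real.exp (c * (t/2)) - 1) ≤ M * Real.exp (c * (t/2)) := by
        nlinarith [hM.le]
      calc M * ((Real.exp (c * (t/2)) - 1) / c)
          = M * (Real.exp (c * (t/2)) - 1) / c := by ring
        _ ≤ M * Real.exp (c * (t/2)) / c := div_le_div_of_nonneg_right key hc.le
        _ = (M / c) * Real.exp (c * (t/2)) := by ring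
    have h2 : Real.exp (c * (t/2)) * ∫ y in (0:ℝ)..(t/2), h₂ y
        ≤ M * Real.exp (c * (t/2)) := by
      nlinarith [mul_le_mul_of_nonneg_left hi2 hE.le]
    rw [heq] at hmono
    linarith [hmono, h1, h2]
  -- piece 2
  have hp2 : ∫ y in (t/2)..t, φ y
      ≤ (M / c) * ((1 + t/2) ^ (-(2*κ)) * Real.exp (c * t))
        + M * ((1 + t/2) ^ (-(1+ξ)) * Real.exp (c * t)) := by
    have hmono : ∫ y in (t/2)..t, φ y
        ≤ ∫ y in (t/2)..t,
            (M * (1 + t/2) ^ (-(2*κ)) * Real.exp (c * y) + Real.exp (c * t) * h₂ y) := by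
      refine intervalIntegral.integral_mono_on ht2' φii2 ?_ fun x hx => ?_
      · refine IntervalIntegrable.add ?_ ?_
        · exact (continuous_const.mul (Real.continuous_exp.comp
            (continuous_const.mul continuous_id))).intervalIntegrable _ _
        · exact (h2ii (t/2) t ht2 ht2').const_mul _
      · have hx0 : (0:ℝ) ≤ x := le_trans ht2 hx.1
        have hb1 : h₁ x ≤ M * (1 + t/2) ^ (-(2*κ)) := by
          refine (hh₁ x hx0).trans ?_
          refine mul_le_mul_of_nonneg_left ?_ hM.le
          exact Real.rpow_le_rpow_of_nonpos (by linarith) (by linarith [hx.1]) (by linarith)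
        have hb2 : Real.exp (c * x) ≤ Real.exp (c * t) :=
          Real.exp_le_exp.2 (mul_le_mul_of_nonneg_left hx.2 hc.le)
        have hb3 := h₂nonneg x hx0
        have he := (Real.exp_pos (c * x)).le
        simp only [hφ]
        nlinarith
    have heq : ∫ y in (t/2)..t,
          (M * (1 + t/2) ^ (-(2*κ)) * Real.exp (c * y) + Real.exp (c * t) * h₂ y)
        = M * (1 + t/2) ^ (-(2*κ)) * ((Real.exp (c * t) - Real.exp (c * (t/2))) / c)
          + Real.exp (c * t) * ∫ y in (t/2)..t, h₂ y := by
      rw [intervalIntegral.integral_add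
        (((by continuity :
            Continuous fun y : ℝ => M * (1 + t/2) ^ (-(2*κ)) * Real.exp (c * y))).intervalIntegrable _ _)
        ((h2ii (t/2) t ht2 ht2').const_mul _),
        intervalIntegral.integral_const_mul, intervalIntegral.integral_const_mul, hexpint]
    have hi2 : ∫ y in (t/2)..t, h₂ y ≤ M * (1 + t/2) ^ (-(1+ξ)) := by
      rw [intervalIntegral.integral_of_le ht2']
      exact tail (t/2) t ht2 ht2'
    have hrp : (0:ℝ) < (1 + t/2) ^ (-(2*κ)) := Real.rpow_pos_of_pos (by linarith) _
    have hE : (0:ℝ) < Real.exp (c * t) := Real.exp_pos _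
    have hE2 : (0:ℝ) < Real.exp (c * (t/2)) := Real.exp_pos _
    have hc0 : c ≠ 0 := hc.ne'
    have h1 : M * (1 + t/2) ^ (-(2*κ)) * ((Real.exp (c * t) - Real.exp (c * (t/2))) / c)
        ≤ (M / c) * ((1 + t/2) ^ (-(2*κ)) * Real.exp (c * t)) := by
      have key : M * (1 + t/2) ^ (-(2*κ)) * (Real.exp (c * t) - Real.exp (c * (t/2)))
          ≤ M * ((1 + t/2) ^ (-(2*κ)) * Real.exp (c * t)) := by
        nlinarith [mul_pos (mul_pos hM hrp) hE2]
      calc M * (1 + t/2) ^ (-(2*κ)) * ((Real.exp (c * t) - Real.exp (c * (t/2))) / c)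
          = M * (1 + t/2) ^ (-(2*κ)) * (Real.exp (c * t) - Real.exp (c * (t/2))) / c := by
            ring
        _ ≤ M * ((1 + t/2) ^ (-(2*κ)) * Real.exp (c * t)) / c :=
            div_le_div_of_nonneg_right key hc.le
        _ = (M / c) * ((1 + t/2) ^ (-(2*κ)) * Real.exp (c * t)) := by ring
    have h2 : Real.exp (c * t) * ∫ y in (t/2)..t, h₂ y
        ≤ M * ((1 + t/2) ^ (-(1+ξ)) * Real.exp (c * t)) := by
      nlinarith [mul_le_mul_of_nonneg_left hi2 hE.le]
    rw [heq] at hmono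
    linarith [hmono, h1, h2]
  -- combine
  set r : ℝ := (1 + t) ^ (-(2 * κ)) with hr
  have hrpos : 0 < r := Real.rpow_pos_of_pos (by linarith) _
  have hE : (0:ℝ) < Real.exp (c * t) := Real.exp_pos _
  have hE2 : (0:ℝ) < Real.exp (c * (t/2)) := Real.exp_pos _
  have hE2' : (1:ℝ) ≤ Real.exp (c * (t/2)) := Real.one_le_exp (by positivity)
  -- f1 : lower exponent
  have f1 : (1 + t/2) ^ (-(1+ξ)) ≤ (1 + t/2) ^ (-(2*κ)) :=
    Real.rpow_le_rpow_of_exponent_le (by linarith) (by linarith)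
  -- f2 : scale base
  have f2 : (1 + t/2) ^ (-(2*κ)) ≤ (2:ℝ) ^ (2*κ) * r := by
    have ha : (0:ℝ) < (1 + t) / 2 := by linarith
    have hstep : (1 + t/2) ^ (-(2*κ)) ≤ ((1 + t) / 2) ^ (-(2*κ)) :=
      Real.rpow_le_rpow_of_nonpos ha (by linarith) (by linarith)
    have hdiv : ((1 + t) / 2) ^ (-(2*κ)) = (1 + t) ^ (-(2*κ)) / (2:ℝ) ^ (-(2*κ)) :=
      Real.div_rpow (by linarith) (by norm_num) _
    have h2r : (2:ℝ) ^ (-(2*κ)) = ((2:ℝ) ^ (2*κ))⁻¹ := Real.rpow_neg (by norm_num) _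
    have heq2 : ((1 + t) / 2) ^ (-(2*κ)) = (2:ℝ) ^ (2*κ) * r := by
      rw [hdiv, h2r, hr, div_eq_mul_inv, inv_inv]
      ring
    calc (1 + t/2) ^ (-(2*κ)) ≤ ((1 + t) / 2) ^ (-(2*κ)) := hstep
      _ = (2:ℝ) ^ (2*κ) * r := heq2
  -- f3 : exponential vs polynomial
  have g3 : Real.exp (c * (t/2)) ≤ A * r * Real.exp (c * t) := by
    have f3 : Real.exp (-(c/2 * t)) ≤ A * r := hA t ht
    have := mul_le_mul_of_nonneg_right f3 hE.le
    calc Real.exp (c * (t/2)) = Real.exp (-(c/2 * t)) * Real.exp (c * t) := by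
          rw [← Real.exp_add]; ring_nf
      _ ≤ A * r * Real.exp (c * t) := this
  have g2 : (1 + t/2) ^ (-(2*κ)) * Real.exp (c * t)
      ≤ (2:ℝ) ^ (2*κ) * r * Real.exp (c * t) :=
    mul_le_mul_of_nonneg_right f2 hE.le
  have g1 : (1 + t/2) ^ (-(1+ξ)) * Real.exp (c * t)
      ≤ (2:ℝ) ^ (2*κ) * r * Real.exp (c * t) :=
    mul_le_mul_of_nonneg_right (f1.trans f2) hE.le
  have g0 : Q 0 ≤ |Q 0| * Real.exp (c * (t/2)) := by
    nlinarith [le_abs_self (Q 0), abs_nonneg (Q 0)]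
  have k1 : (|Q 0| + M/c + M) * Real.exp (c * (t/2))
      ≤ (|Q 0| + M/c + M) * (A * r * Real.exp (c * t)) :=
    mul_le_mul_of_nonneg_left g3 (by positivity)
  have k2 : (M/c) * ((1 + t/2) ^ (-(2*κ)) * Real.exp (c * t))
      ≤ (M/c) * ((2:ℝ) ^ (2*κ) * r * Real.exp (c * t)) :=
    mul_le_mul_of_nonneg_left g2 (by positivity)
  have k3 : M * ((1 + t/2) ^ (-(1+ξ)) * Real.exp (c * t))
      ≤ M * ((2:ℝ) ^ (2*κ) * r * Real.exp (c * t)) :=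
    mul_le_mul_of_nonneg_left g1 hM.le
  have hfin : Real.exp (c * t) * Q t ≤ (C * r) * Real.exp (c * t) := by
    have hkey' : Real.exp (c * t) * Q t - Q 0 ≤ ∫ y in (0:ℝ)..t, φ y := by
      simpa using hkey
    rw [hsplit] at hkey'
    have hCr : (C * r) * Real.exp (c * t)
        = (|Q 0| + M/c + M) * (A * r * Real.exp (c * t))
          + (M/c) * ((2:ℝ) ^ (2*κ) * r * Real.exp (c * t))
          + M * ((2:ℝ) ^ (2*κ) * r * Real.exp (c * t)) := by
      rw [hC]; ring
    rw [hCr]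
    linarith [hkey', hp1, hp2, g0, k1, k2, k3]
  have := le_of_mul_le_mul_right (by linarith [hfin] : Q t * Real.exp (c * t) ≤ (C * r) * Real.exp (c * t)) hE
  exact this
end

section
/- Let Ω ⊂ ℝ² be a bounded open set, T > 0, γ > 0, η > 0 and n ≥ 1. Let v : Ω × (0,T] → ℝ² be a (given) vector field, and let d : closure(Ω) × [0,T] → ℝⁿ be continuous, with d twice continuously differentiable in x and continuously differentiable in t on Ω × (0,T], satisfying pointwise the equation ∂ₜd + (v·∇)d = γ (Δd − η^{−2}(|d|² − 1) d) in Ω × (0,T]. If |d(x,0)| ≤ 1 for all x ∈ closure(Ω) and |d(x,t)| ≤ 1 for all x ∈ ∂Ω and t ∈ [0,T], then |d(x,t)| ≤ 1 for all (x,t) ∈ closure(Ω) × [0,T]. -/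
open MeasureTheory
open Filter Topology Set RealInnerProductSpace

/-- Second derivative test: at a local max, the second derivative is nonpositive. -/
lemma second_deriv_test_aux {q q' : ℝ → ℝ} {c : ℝ}
    (hq : ∀ᶠ s in 𝓝 (0 : ℝ), HasDerivAt q (q' s) s)
    (hq' : HasDerivAt q' c 0)
    (hmax : IsLocalMax q 0) : c ≤ 0 := by
  by_contra hc
  push_neg at hc
  have hq'0 : q' 0 = 0 := by
    have h1 : deriv q 0 = q' 0 := hq.self_of_nhds.deriv
    rw [← h1]; exact hmax.deriv_eq_zero
  have hslope : Tendsto (slope q' 0) (𝓝[≠] 0) (𝓝 c) :=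
    hasDerivAt_iff_tendsto_slope.mp hq'
  have hpos : ∀ᶠ s in 𝓝[>] (0 : ℝ), 0 < q' s := by
    have h2 : ∀ᶠ s in 𝓝[>] (0 : ℝ), 0 < slope q' 0 s :=
      (hslope.mono_left (nhdsWithin_mono _ (fun s hs => ne_of_gt hs))).eventually
        (eventually_gt_nhds hc)
    filter_upwards [h2, self_mem_nhdsWithin] with s h2s hs
    have : slope q' 0 s = q' s / s := by
      simp [slope_def_field, hq'0]
    rw [this] at h2s
    rcases div_pos_iff.mp h2s with ⟨h, _⟩ | ⟨_, h⟩
    · exact h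
    · exact absurd hs (not_lt.mpr h.le)
  have hall : ∀ᶠ s in 𝓝[>] (0 : ℝ),
      0 < q' s ∧ HasDerivAt q (q' s) s ∧ q s ≤ q 0 :=
    hpos.and ((hq.filter_mono nhdsWithin_le_nhds).and (hmax.filter_mono nhdsWithin_le_nhds))
  obtain ⟨u, hu, hsub⟩ := mem_nhdsGT_iff_exists_Ioo_subset.mp hall
  have hu0 : (0 : ℝ) < u := hu
  have hb0 : (0 : ℝ) < u / 2 := by linarith
  have hbu : u / 2 < u := by linarith
  have hcont : ContinuousOn q (Icc 0 (u / 2)) := by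
    intro s hs
    rcases eq_or_lt_of_le hs.1 with h | h
    · subst h
      exact hq.self_of_nhds.continuousAt.continuousWithinAt
    · exact ((hsub ⟨h, lt_of_le_of_lt hs.2 hbu⟩).2.1.continuousAt).continuousWithinAt
  have hderiv : ∀ s ∈ Ioo (0 : ℝ) (u / 2), HasDerivAt q (q' s) s :=
    fun s hs => (hsub ⟨hs.1, hs.2.trans hbu⟩).2.1
  obtain ⟨ζ, hζ, hζeq⟩ := exists_hasDerivAt_eq_slope q q' hb0 hcont hderiv
  have h1 : 0 < q' ζ := (hsub ⟨hζ.1, hζ.2.trans hbu⟩).1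
  have h2 : q (u / 2) ≤ q 0 := (hsub ⟨hb0, hbu⟩).2.2
  rw [hζeq] at h1
  have h3 : (q (u / 2) - q 0) / (u / 2 - 0) ≤ 0 :=
    div_nonpos_of_nonpos_of_nonneg (by linarith) (by linarith)
  linarith

set_option maxHeartbeats 1000000 in
/-- Weak maximum principle for the director equation with Ginzburg–Landau nonlinearity:
a classical solution of `∂ₜd + (v·∇)d = γ(Δd − η^{−2}(|d|²−1)d)` on `Ω × (0,T]` with
`|d| ≤ 1` initially and on the lateral boundary satisfies `|d| ≤ 1` everywhere. -/
theorem director_maximum_principle {n : ℕ} (hn : 1 ≤ n)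
    (Ω : Set (EuclideanSpace ℝ (Fin 2))) (hΩopen : IsOpen Ω)
    (hΩbdd : Bornology.IsBounded Ω)
    (T γ η : ℝ) (hT : 0 < T) (hγ : 0 < γ) (hη : 0 < η)
    (v : EuclideanSpace ℝ (Fin 2) → ℝ → EuclideanSpace ℝ (Fin 2))
    (d : EuclideanSpace ℝ (Fin 2) → ℝ → EuclideanSpace ℝ (Fin n))
    (hdcont : ContinuousOn (fun p : EuclideanSpace ℝ (Fin 2) × ℝ => d p.1 p.2)
      (closure Ω ×ˢ Set.Icc 0 T))
    (hdx : ∀ t ∈ Set.Ioc (0 : ℝ) T, ContDiffOn ℝ 2 (fun y => d y t) Ω)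
    (hdt : ∀ x ∈ Ω, ContDiffOn ℝ 1 (fun s => d x s) (Set.Ioc 0 T))
    (heq : ∀ x ∈ Ω, ∀ t ∈ Set.Ioc (0 : ℝ) T,
      derivWithin (fun s => d x s) (Set.Ioc 0 T) t
          + fderiv ℝ (fun y => d y t) x (v x t)
        = γ • ((∑ i : Fin 2,
            fderiv ℝ (fderiv ℝ (fun y => d y t)) x (EuclideanSpace.single i 1)
              (EuclideanSpace.single i 1))
          - (η ^ 2)⁻¹ • ((‖d x t‖ ^ 2 - 1) • d x t)))
    (hinit : ∀ x ∈ closure Ω, ‖d x 0‖ ≤ 1)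
    (hbdry : ∀ x ∈ frontier Ω, ∀ t ∈ Set.Icc (0 : ℝ) T, ‖d x t‖ ≤ 1) :
    ∀ x ∈ closure Ω, ∀ t ∈ Set.Icc (0 : ℝ) T, ‖d x t‖ ≤ 1 := by
  intro x hx t ht
  by_contra hgt
  push_neg at hgt
  -- extract a maximum point of ‖d‖ on the compact cylinder
  have hKcomp : IsCompact (closure Ω ×ˢ Set.Icc (0:ℝ) T) :=
    hΩbdd.isCompact_closure.prod isCompact_Icc
  have hKne : (closure Ω ×ˢ Set.Icc (0:ℝ) T).Nonempty := ⟨(x, t), ⟨hx, ht⟩⟩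
  obtain ⟨⟨x₀, t₀⟩, hp₀K, hp₀max⟩ := hKcomp.exists_isMaxOn hKne hdcont.norm
  have hx₀cl : x₀ ∈ closure Ω := hp₀K.1
  have ht₀I : t₀ ∈ Set.Icc (0:ℝ) T := hp₀K.2
  have hnorm : ∀ y ∈ closure Ω, ∀ s ∈ Set.Icc (0:ℝ) T, ‖d y s‖ ≤ ‖d x₀ t₀‖ :=
    fun y hy s hs => isMaxOn_iff.mp hp₀max (y, s) (Set.mk_mem_prod hy hs)
  have hM : (1:ℝ) < ‖d x₀ t₀‖ := lt_of_lt_of_le hgt (hnorm x hx t ht)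
  have hx₀Ω : x₀ ∈ Ω := by
    by_contra hxf
    have hfr : x₀ ∈ frontier Ω := by
      rw [frontier, hΩopen.interior_eq]; exact ⟨hx₀cl, hxf⟩
    exact absurd (hbdry x₀ hfr t₀ ht₀I) (not_le.mpr hM)
  have ht₀pos : 0 < t₀ := by
    rcases lt_or_eq_of_le ht₀I.1 with h | h
    · exact h
    · exfalso; rw [← h] at hM; exact absurd (hinit x₀ hx₀cl) (not_le.mpr hM)
  have ht₀ : t₀ ∈ Set.Ioc (0:ℝ) T := ⟨ht₀pos, ht₀I.2⟩
  -- squared-norm maximality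
  have hsq : ∀ y ∈ closure Ω, ∀ s ∈ Set.Icc (0:ℝ) T,
      ⟪d y s, d y s⟫ ≤ ⟪d x₀ t₀, d x₀ t₀⟫ := by
    intro y hy s hs
    rw [real_inner_self_eq_norm_sq, real_inner_self_eq_norm_sq]
    exact pow_le_pow_left₀ (norm_nonneg _) (hnorm y hy s hs) 2
  -- spatial regularity
  have hu2 : ContDiffOn ℝ 2 (fun y => d y t₀) Ω := hdx t₀ ht₀
  have hdiff : ∀ y ∈ Ω, DifferentiableAt ℝ (fun y => d y t₀) y := fun y hy =>
    (hu2.differentiableOn (by norm_num) y hy).differentiableAt (hΩopen.mem_nhds hy)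
  have hfd : DifferentiableAt ℝ (fderiv ℝ (fun y => d y t₀)) x₀ :=
    ((hu2.contDiffAt (hΩopen.mem_nhds hx₀Ω)).fderiv_right (m := 1)
      (by norm_num)).differentiableAt one_ne_zero
  -- first spatial derivative of the squared norm vanishes
  have hgmax : IsLocalMax (fun y => ⟪d y t₀, d y t₀⟫) x₀ :=
    Filter.eventually_of_mem (mem_of_superset (hΩopen.mem_nhds hx₀Ω) subset_closure)
      (fun y hy => hsq y hy t₀ ht₀I)
  have hDzero : ∀ h, ⟪d x₀ t₀, fderiv ℝ (fun y => d y t₀) x₀ h⟫ = 0 := by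
    intro h
    have h0 : fderiv ℝ (fun y => ⟪d y t₀, d y t₀⟫) x₀ = 0 := hgmax.fderiv_eq_zero
    have h1 := fderiv_inner_apply (𝕜 := ℝ) (hdiff x₀ hx₀Ω) (hdiff x₀ hx₀Ω) h
    rw [h0] at h1
    simp only [ContinuousLinearMap.zero_apply] at h1
    have h2 : ⟪d x₀ t₀, fderiv ℝ (fun y => d y t₀) x₀ h⟫
        = ⟪fderiv ℝ (fun y => d y t₀) x₀ h, d x₀ t₀⟫ := real_inner_comm _ _
    linarith
  -- second directional derivatives of d paired with d are nonpositive
  have hsecond : ∀ e : EuclideanSpace ℝ (Fin 2),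
      ⟪d x₀ t₀, fderiv ℝ (fderiv ℝ (fun y => d y t₀)) x₀ e e⟫ ≤ 0 := by
    intro e
    have hLd : ∀ s : ℝ, HasDerivAt (fun s : ℝ => x₀ + s • e) e s := by
      intro s
      have h1 : HasDerivAt (fun s : ℝ => s • e) ((1:ℝ) • e) s :=
        (hasDerivAt_id s).smul_const e
      simpa using h1.const_add x₀
    have hLc : Continuous (fun s : ℝ => x₀ + s • e) := by continuity
    have hLΩ : ∀ᶠ s in 𝓝 (0:ℝ), x₀ + s • e ∈ Ω := by
      have h0 : x₀ + (0:ℝ) • e = x₀ := by simp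
      exact hLc.continuousAt (by rw [h0]; exact hΩopen.mem_nhds hx₀Ω)
    have ha : ∀ s : ℝ, x₀ + s • e ∈ Ω →
        HasDerivAt (fun τ : ℝ => d (x₀ + τ • e) t₀)
          (fderiv ℝ (fun y => d y t₀) (x₀ + s • e) e) s := by
      intro s hs
      have := (hdiff _ hs).hasFDerivAt.comp_hasDerivAt s (hLd s)
      simpa [Function.comp_def] using this
    have hq : ∀ᶠ s in 𝓝 (0:ℝ), HasDerivAt (fun τ : ℝ => ⟪d (x₀ + τ • e) t₀, d (x₀ + τ • e) t₀⟫)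
        (2 * ⟪d (x₀ + s • e) t₀, fderiv ℝ (fun y => d y t₀) (x₀ + s • e) e⟫) s := by
      filter_upwards [hLΩ] with s hs
      have h1 := (ha s hs).inner ℝ (ha s hs)
      have h2 : ⟪d (x₀ + s • e) t₀, fderiv ℝ (fun y => d y t₀) (x₀ + s • e) e⟫
            + ⟪fderiv ℝ (fun y => d y t₀) (x₀ + s • e) e, d (x₀ + s • e) t₀⟫
          = 2 * ⟪d (x₀ + s • e) t₀, fderiv ℝ (fun y => d y t₀) (x₀ + s • e) e⟫ := by
        rw [real_inner_comm (fderiv ℝ (fun y => d y t₀) (x₀ + s • e) e)]; ring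
      rw [h2] at h1; exact h1
    have hbderiv : HasDerivAt (fun τ : ℝ => fderiv ℝ (fun y => d y t₀) (x₀ + τ • e) e)
        (fderiv ℝ (fderiv ℝ (fun y => d y t₀)) x₀ e e) 0 := by
      have hm : HasFDerivAt (fun y => fderiv ℝ (fun y => d y t₀) y e)
          ((fderiv ℝ (fderiv ℝ (fun y => d y t₀)) x₀).flip e) x₀ := by
        have := hfd.hasFDerivAt.clm_apply (hasFDerivAt_const e x₀)
        simpa using this
      have hm' : HasFDerivAt (fun y => fderiv ℝ (fun y => d y t₀) y e)
          ((fderiv ℝ (fderiv ℝ (fun y => d y t₀)) x₀).flip e) (x₀ + (0:ℝ) • e) := by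
        simpa using hm
      have h3 := hm'.comp_hasDerivAt 0 (hLd 0)
      simpa [ContinuousLinearMap.flip_apply, Function.comp_def] using h3
    have ha0 : HasDerivAt (fun τ : ℝ => d (x₀ + τ • e) t₀)
        (fderiv ℝ (fun y => d y t₀) x₀ e) 0 := by
      have h0 : x₀ + (0:ℝ) • e = x₀ := by simp
      have := ha 0 (by rw [h0]; exact hx₀Ω)
      rwa [h0] at this
    have hp : HasDerivAt (fun s : ℝ => ⟪d (x₀ + s • e) t₀, fderiv ℝ (fun y => d y t₀) (x₀ + s • e) e⟫)
        (⟪d x₀ t₀, fderiv ℝ (fderiv ℝ (fun y => d y t₀)) x₀ e e⟫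
          + ⟪fderiv ℝ (fun y => d y t₀) x₀ e, fderiv ℝ (fun y => d y t₀) x₀ e⟫) 0 := by
      have := ha0.inner ℝ hbderiv
      simpa using this
    have hqmax : IsLocalMax (fun s : ℝ => ⟪d (x₀ + s • e) t₀, d (x₀ + s • e) t₀⟫) 0 := by
      filter_upwards [hLΩ] with s hs
      have := hsq (x₀ + s • e) (subset_closure hs) t₀ ht₀I
      simpa using this
    have h2d := second_deriv_test_aux hq (hp.const_mul 2) hqmax
    have hnn : (0:ℝ) ≤ ⟪fderiv ℝ (fun y => d y t₀) x₀ e, fderiv ℝ (fun y => d y t₀) x₀ e⟫ :=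
      real_inner_self_nonneg
    nlinarith
  -- time derivative is nonnegative at the max
  have hψd : DifferentiableWithinAt ℝ (fun s => d x₀ s) (Set.Ioc 0 T) t₀ :=
    ((hdt x₀ hx₀Ω).differentiableOn (by norm_num)) t₀ ht₀
  have hct : HasDerivWithinAt (fun s => d x₀ s)
      (derivWithin (fun s => d x₀ s) (Set.Ioc 0 T) t₀) (Set.Ioc 0 T) t₀ := hψd.hasDerivWithinAt
  have hψ : HasDerivWithinAt (fun s => ⟪d x₀ s, d x₀ s⟫)
      (⟪d x₀ t₀, derivWithin (fun s => d x₀ s) (Set.Ioc 0 T) t₀⟫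
        + ⟪derivWithin (fun s => d x₀ s) (Set.Ioc 0 T) t₀, d x₀ t₀⟫) (Set.Ioc 0 T) t₀ :=
    hct.inner ℝ hct
  have hψmax : IsLocalMaxOn (fun s => ⟪d x₀ s, d x₀ s⟫) (Set.Ioc 0 T) t₀ :=
    Filter.eventually_of_mem self_mem_nhdsWithin
      (fun s hs => hsq x₀ hx₀cl s (Set.Ioc_subset_Icc_self hs))
  have hcone : t₀ / 2 - t₀ ∈ posTangentConeAt (Set.Ioc 0 T) t₀ := by
    apply sub_mem_posTangentConeAt_of_segment_subset
    rw [segment_symm, segment_eq_Icc (by linarith : t₀/2 ≤ t₀)]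
    intro z hz
    exact ⟨lt_of_lt_of_le (by linarith) hz.1, le_trans hz.2 ht₀I.2⟩
  have hnonpos := hψmax.hasFDerivWithinAt_nonpos hψ.hasFDerivWithinAt hcone
  simp only [ContinuousLinearMap.smulRight_apply, ContinuousLinearMap.one_apply, ContinuousLinearMap.toSpanSingleton_apply,
    smul_eq_mul] at hnonpos
  have htime : 0 ≤ ⟪d x₀ t₀, derivWithin (fun s => d x₀ s) (Set.Ioc 0 T) t₀⟫ := by
    have h2 : ⟪derivWithin (fun s => d x₀ s) (Set.Ioc 0 T) t₀, d x₀ t₀⟫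
        = ⟪d x₀ t₀, derivWithin (fun s => d x₀ s) (Set.Ioc 0 T) t₀⟫ := real_inner_comm _ _
    nlinarith [hnonpos, h2, ht₀pos]
  -- put everything together using the PDE at (x₀, t₀)
  have HEQ := congrArg (fun z => ⟪d x₀ t₀, z⟫) (heq x₀ hx₀Ω t₀ ht₀)
  simp only [inner_add_right, inner_sub_right, real_inner_smul_right, inner_sum] at HEQ
  have hS : ∑ i : Fin 2, ⟪d x₀ t₀, fderiv ℝ (fderiv ℝ (fun y => d y t₀)) x₀
      (EuclideanSpace.single i 1) (EuclideanSpace.single i 1)⟫ ≤ 0 :=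
    Finset.sum_nonpos (fun i _ => hsecond (EuclideanSpace.single i 1))
  have hdd : ⟪d x₀ t₀, d x₀ t₀⟫ = ‖d x₀ t₀‖ ^ 2 := real_inner_self_eq_norm_sq _
  have hB := hDzero (v x₀ t₀)
  have hN : (1:ℝ) < ‖d x₀ t₀‖ ^ 2 := by nlinarith [norm_nonneg (d x₀ t₀)]
  have hη2 : (0:ℝ) < (η ^ 2)⁻¹ := by positivity
  rw [hdd] at HEQ
  nlinarith [HEQ, htime, hS, hB, mul_pos hη2 (mul_pos (by linarith : (0:ℝ) < ‖d x₀ t₀‖^2 - 1) (by nlinarith : (0:ℝ) < ‖d x₀ t₀‖^2)), hγ]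
end
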